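/- Let Σ₂ = {a,b}, k ∈ ℕ, and w ∈ Σ₂*. The Simon congruence class [w]_{∼_k} = { w' ∈ Σ₂* : w' ∼_k w } is a singleton if and only if ι(w) < k and |α_i| < k − ι(w) for all i ∈ {0,1,…,ι(w)}, where α₀,…,α_{ι(w)} are the α-factors of the α-β-factorization of w. -/

import Mathlib

open List

variable {α : Type*} [DecidableEq α] [Fintype α]

/-- Simon `k`-congruence: `u` and `v` have the same scattered factors
(subsequences) of length at most `k`. -/
def SimonCongr (k : ℕ) (u v : List α) : Prop :=
  ∀ s : List α, s.length ≤ k → (s.Sublist u ↔ s.Sublist v)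

/-- `w` is `k`-universal with respect to the alphabet `S`: every word of length `k`
over `S` is a scattered factor of `w`. -/
def UniversalOn (S : Finset α) (k : ℕ) (w : List α) : Prop :=
  ∀ s : List α, s.length = k → (∀ x ∈ s, x ∈ S) → s.Sublist w

/-- The universality index of `w` w.r.t. the alphabet `S`. -/
noncomputable def iotaOn (S : Finset α) (w : List α) : ℕ :=
  sSup {k | UniversalOn S k w}

/-- The universality index of `w` w.r.t. the full alphabet. -/
noncomputable def iotaUniv (w : List α) : ℕ := iotaOn Finset.univ w

/-- `a` is an arch w.r.t. `S`: it contains every letter of `S`, and its last letter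
belongs to `S` and occurs exactly once in `a`. -/
def IsArchOn (S : Finset α) (a : List α) : Prop :=
  (∀ x ∈ S, x ∈ a) ∧ ∃ a' x, a = a' ++ [x] ∧ x ∈ S ∧ x ∉ a'

/-- `(ars, r)` is the arch factorization of `w` w.r.t. `S`. -/
def IsArchFactOn (S : Finset α) (w : List α) (ars : List (List α)) (r : List α) : Prop :=
  w = ars.flatten ++ r ∧ (∀ a ∈ ars, IsArchOn S a) ∧ ¬ (∀ x ∈ S, x ∈ r)

/-- `(A, B)` is the α-β-factorization of `w` with `m` arches:
`αᵢ₋₁βᵢ` (for `i ∈ [m]`) together with rest `α_m` is the arch factorization of `w`, and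
`(β_{m-i}α_{m-i})^R` together with rest `α₀^R` is the arch factorization of `w^R`. -/
def IsAlphaBetaFact (w : List α) (m : ℕ) (A B : ℕ → List α) : Prop :=
  IsArchFactOn Finset.univ w (List.ofFn fun i : Fin m => A i.val ++ B (i.val + 1)) (A m) ∧
  IsArchFactOn Finset.univ w.reverse
    (List.ofFn fun i : Fin m => (B (m - i.val) ++ A (m - i.val)).reverse) ((A 0).reverse)

/-- The concatenation `αᵢ βᵢ₊₁ αᵢ₊₁ ⋯ βⱼ αⱼ`. -/
def abSeg (A B : ℕ → List α) (i j : ℕ) : List α :=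
  A i ++ (((List.Ico (i + 1) (j + 1)).map fun l => B l ++ A l).flatten)

/-- The core of a `β`-factor: the factor with its first and last letter removed. -/
def coreOf (b : List α) : List α := (b.drop 1).dropLast

namespace SimonAux

lemma bool_eq_not {a b : Bool} (h : a ≠ b) : a = !b := by
  cases a <;> cases b <;> simp_all

/-- a "reverse-arch block": first letter `f`, then `q` copies of `!f`. -/
def blk (p : Bool × ℕ) : List Bool := p.1 :: List.replicate p.2 (!p.1)

def blks (ps : List (Bool × ℕ)) : List Bool := (ps.map blk).flatten

def chain (ps : List (Bool × ℕ)) : List Bool := ps.map Prod.fst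

def GoodPs (ps : List (Bool × ℕ)) : Prop := ∀ p ∈ ps, 1 ≤ p.2

lemma blks_nil : blks [] = [] := rfl

lemma blks_cons (p ps) : blks (p :: ps) = blk p ++ blks ps := by
  simp [blks]

lemma blks_append (ps qs) : blks (ps ++ qs) = blks ps ++ blks qs := by
  simp [blks]

lemma chain_cons (p ps) : chain (p :: ps) = p.1 :: chain ps := rfl

lemma chain_length (ps : List (Bool × ℕ)) : (chain ps).length = ps.length := by
  simp [chain]

lemma mem_blk (b : Bool) (p : Bool × ℕ) (hq : 1 ≤ p.2) : b ∈ blk p := by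
  rcases p with ⟨f, q⟩
  simp only [blk, List.mem_cons, List.mem_replicate]
  simp only at hq
  cases b <;> cases f <;> simp_all <;> omega

lemma emb_univ : ∀ (s : List Bool) (ps : List (Bool × ℕ)), GoodPs ps →
    s.length ≤ ps.length → s <+ blks ps
  | [], _, _, _ => List.nil_sublist _
  | a :: s, [], _, h => by simp at h
  | a :: s, p :: ps, hg, h => by
    rw [blks_cons]
    have h1 : [a] <+ blk p := List.singleton_sublist.mpr (mem_blk a p (hg p (by simp)))
    have h2 : s <+ blks ps := emb_univ s ps (fun x hx => hg x (by simp [hx]))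
      (by simpa using h)
    simpa using h1.append h2

lemma tail_elems {l : List Bool} {a b : Bool} {q : ℕ} (h : l <+ a :: List.replicate q b) :
    ∀ x ∈ l.drop 1, x = b := by
  rcases List.sublist_cons_iff.mp h with h' | ⟨r, rfl, hr⟩
  · intro x hx
    exact List.eq_of_mem_replicate (h'.subset (List.mem_of_mem_drop hx))
  · intro x hx
    simp only [List.drop_succ_cons, List.drop_zero] at hx
    exact List.eq_of_mem_replicate (hr.subset hx)

/-- Key impossibility: a nonempty word followed by the chain of the blocks' first
letters never embeds into the blocks. -/
lemma chain_not_sublist : ∀ (ps : List (Bool × ℕ)), GoodPs ps →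
    ∀ u : List Bool, u ≠ [] → ¬ (u ++ chain ps <+ blks ps)
  | [], _, u, hu, h => by
    simp only [chain, List.map_nil, List.append_nil, blks, List.flatten_nil,
      List.sublist_nil] at h
    exact hu h
  | (f, q) :: ps, hg, u, hu, h => by
    have hg' : GoodPs ps := fun x hx => hg x (List.mem_cons_of_mem _ hx)
    rw [blks_cons, chain_cons] at h
    rcases List.sublist_append_iff.mp h with ⟨σ₁, σ₂, heq, hσ₁, hσ₂⟩
    have hσ₂eq : σ₂ = (u ++ f :: chain ps).drop σ₁.length := by
      rw [heq, List.drop_left]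
    by_cases hlen : σ₁.length ≤ u.length
    · have hσ₂eq' : σ₂ = (u.drop σ₁.length ++ [f]) ++ chain ps := by
        rw [hσ₂eq, List.drop_append, Nat.sub_eq_zero_of_le hlen]
        simp
      refine chain_not_sublist ps hg' (u.drop σ₁.length ++ [f]) (by simp) ?_
      rw [← hσ₂eq']; exact hσ₂
    · push_neg at hlen
      have hσ₁eq : σ₁ = (u ++ f :: chain ps).take σ₁.length := by
        rw [heq, List.take_left]
      have hpre : u ++ [f] <+ σ₁ := by
        have h1 : σ₁.take (u.length + 1) = u ++ [f] := by
          rw [hσ₁eq, List.take_take, min_eq_left (by omega),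
            List.take_append, List.take_of_length_le (by omega)]
          have h2 : u.length + 1 - u.length = 1 := by omega
          rw [h2]
          rfl
        rw [← h1]
        exact List.take_sublist _ _
      rcases List.exists_cons_of_ne_nil hu with ⟨b, t, rfl⟩
      have hfmem : f ∈ ((b :: t) ++ [f]).drop 1 := by simp
      have := tail_elems (hpre.trans hσ₁) f hfmem
      simp at this

lemma peel_x {x : Bool} {P t R : List Bool} (hx : x ∉ P)
    (h : x :: t <+ P ++ x :: R) : t <+ R := by
  rcases List.sublist_append_iff.mp h with ⟨σ₁, σ₂, heq, hσ₁, hσ₂⟩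
  cases σ₁ with
  | nil =>
    simp only [List.nil_append] at heq
    rw [← heq] at hσ₂
    exact List.cons_sublist_cons.mp hσ₂
  | cons y σ₁' =>
    exfalso
    injection heq with h1 h2
    subst h1
    exact hx (hσ₁.subset (by simp))

lemma true_emb {N : ℕ} {C : Bool} {ps : List (Bool × ℕ)} (hps : GoodPs ps)
    {t : ℕ} (ht : t ≤ N) {s : List Bool} (hs : s.length ≤ ps.length) :
    List.replicate t C ++ s <+ List.replicate N C ++ blks ps :=
  ((List.replicate_sublist_replicate C).mpr ht).append (emb_univ s ps hps hs)

lemma false_emb {N : ℕ} {C c0 : Bool} {ps : List (Bool × ℕ)} (hps : GoodPs ps)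
    {t : ℕ} (ht : 1 ≤ t) (hbad : c0 ≠ C ∨ N < t) :
    ¬ (List.replicate t c0 ++ chain ps <+ List.replicate N C ++ blks ps) := by
  intro h
  rcases List.sublist_append_iff.mp h with ⟨σ₁, σ₂, heq, hσ₁, hσ₂⟩
  rcases List.sublist_replicate_iff.mp hσ₁ with ⟨j, hj, rfl⟩
  have hσ₂eq : σ₂ = (List.replicate t c0 ++ chain ps).drop j := by
    have h2 := congrArg (List.drop j) heq
    rw [show (List.replicate j C ++ σ₂).drop j = σ₂ from List.drop_left' (by simp)] at h2
    exact h2.symm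
  have hjt : j ≤ t → σ₂ = List.replicate (t - j) c0 ++ chain ps := by
    intro hjt'
    rw [hσ₂eq, List.drop_append, List.drop_replicate]
    have h0 : j - (List.replicate t c0).length = 0 := by simp; omega
    rw [h0, List.drop_zero]
  -- if j ≥ 1 then c0 = C
  have hlet : 1 ≤ j → c0 = C := by
    intro h1
    have h3 := congrArg (·.head?) heq
    rcases Nat.exists_eq_add_of_le ht with ⟨t', rfl⟩
    rcases Nat.exists_eq_add_of_le h1 with ⟨j', rfl⟩
    simp only [List.replicate_add, List.replicate_succ, List.replicate_zero,
      List.cons_append, List.nil_append, List.head?_cons] at h3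
    exact Option.some.inj h3
  rcases hbad with hbad | hbad
  · have hj0 : j = 0 := by
      by_contra h0
      exact hbad (hlet (by omega))
    subst hj0
    simp only [List.replicate_zero, List.nil_append] at heq
    rw [← heq] at hσ₂
    exact chain_not_sublist ps hps (List.replicate t c0) (by simp; omega)
      (by simpa using hσ₂)
  · have hjt' : j ≤ t := by omega
    have := hjt hjt'
    rw [this] at hσ₂
    have h1t : 1 ≤ t - j := by omega
    exact chain_not_sublist ps hps (List.replicate (t - j) c0) (by simp; omega) hσ₂

lemma theta_false {f : Bool} {q : ℕ} (hq : 1 ≤ q) {rest : List (Bool × ℕ)}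
    (hrest : GoodPs rest) :
    ¬ (([!f, f] ++ chain rest) <+ blks ((f, q) :: rest)) := by
  intro h
  rw [blks_cons] at h
  rcases List.sublist_append_iff.mp h with ⟨σ₁, σ₂, heq, hσ₁, hσ₂⟩
  have hlen : σ₁.length ≤ 1 := by
    by_contra hl
    push_neg at hl
    have h1 : σ₁.take 2 = [!f, f] := by
      have h2 : σ₁ = ([!f, f] ++ chain rest).take σ₁.length := by
        rw [heq, List.take_left]
      rw [h2, List.take_take, min_eq_left (by omega)]
      rfl
    have hpre : [!f, f] <+ σ₁ := by
      rw [← h1]; exact List.take_sublist _ _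
    have hfmem : f ∈ ([!f, f] : List Bool).drop 1 := by simp
    have := tail_elems (hpre.trans hσ₁) f hfmem
    simp at this
  have hσ₂eq : σ₂ = ([!f, f] ++ chain rest).drop σ₁.length := by
    rw [heq, List.drop_left]
  rcases Nat.le_one_iff_eq_zero_or_eq_one.mp hlen with h' | h' <;> rw [h'] at hσ₂eq
  · have hh : σ₂ = [!f, f] ++ chain rest := by rw [hσ₂eq]; rfl
    rw [hh] at hσ₂
    exact chain_not_sublist rest hrest [!f, f] (by simp) hσ₂
  · have hh : σ₂ = [f] ++ chain rest := by rw [hσ₂eq]; rfl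
    rw [hh] at hσ₂
    exact chain_not_sublist rest hrest [f] (by simp) hσ₂

def step (n : ℕ) (c : Bool) (p : Bool × ℕ) : ℕ :=
  if 1 ≤ n ∧ p.1 = !c then p.2 else p.2 - 1

def RunsOK (kk : ℕ) : ℕ → Bool → List (Bool × ℕ) → Prop
  | n, _, [] => n + 1 ≤ kk
  | n, c, p :: rest => n + 1 ≤ kk ∧ RunsOK kk (step n c p) (!p.1) rest

lemma sc_refl (k : ℕ) (u : List Bool) : SimonCongr k u u := fun _ _ => Iff.rfl

lemma sc_peel {k' : ℕ} {x : Bool} {P V₂ W₂ : List Bool} (hx : x ∉ P)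
    (h : SimonCongr k' (P ++ x :: V₂) (P ++ x :: W₂)) :
    SimonCongr (k' - 1) V₂ W₂ := by
  intro s hs
  rcases s with _ | ⟨a, s'⟩
  · simp [List.nil_sublist]
  · have hlen : (x :: a :: s').length ≤ k' := by
      simp only [List.length_cons] at hs ⊢
      omega
    have key : ∀ {Z : List Bool}, (a :: s') <+ Z → x :: a :: s' <+ P ++ x :: Z := by
      intro Z hz
      exact (List.cons_sublist_cons.mpr hz).trans (List.sublist_append_right P _)
    constructor
    · intro hv
      exact peel_x hx ((h _ hlen).mp (key hv))
    · intro hw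
      exact peel_x hx ((h _ hlen).mpr (key hw))

lemma run_eq {kk r N N' : ℕ} {C D : Bool} {psW psV : List (Bool × ℕ)}
    (hW : GoodPs psW) (hV : GoodPs psV) (hrW : psW.length = r) (hrV : psV.length = r)
    (hN : N + 1 ≤ kk)
    (hsc : SimonCongr (kk + r) (List.replicate N' D ++ blks psV)
      (List.replicate N C ++ blks psW)) :
    N' = N ∧ (1 ≤ N → D = C) := by
  have hWV : ∀ t ≤ N, List.replicate t C ++ chain psV <+ List.replicate N' D ++ blks psV := by
    intro t ht
    have h1 : List.replicate t C ++ chain psV <+ List.replicate N C ++ blks psW :=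
      true_emb hW ht (by rw [chain_length, hrV, hrW])
    exact (hsc _ (by simp [chain_length, hrV]; omega)).mpr h1
  have hVW : ∀ t, t ≤ N' → t ≤ kk → List.replicate t D ++ chain psW <+
      List.replicate N C ++ blks psW := by
    intro t ht htk
    have h1 : List.replicate t D ++ chain psW <+ List.replicate N' D ++ blks psV :=
      true_emb hV ht (by rw [chain_length, hrW, hrV])
    exact (hsc _ (by simp [chain_length, hrW]; omega)).mp h1
  have hA : 1 ≤ N → (D = C ∧ N ≤ N') := by
    intro h1
    by_contra hbad
    refine false_emb hV (t := N) h1 ?_ (hWV N le_rfl)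
    push_neg at hbad
    by_cases hcd : C = D
    · exact Or.inr (by have := hbad (by cases C <;> cases D <;> simp_all); omega)
    · exact Or.inl hcd
  have hB1 : 1 ≤ N' → (D = C ∧ 1 ≤ N) := by
    intro h1
    by_contra hbad
    refine false_emb hW (t := 1) le_rfl ?_ (hVW 1 h1 (by omega))
    push_neg at hbad
    by_cases hdc : D = C
    · exact Or.inr (by have := hbad hdc; omega)
    · exact Or.inl hdc
  have hB2 : N' ≤ N := by
    by_contra hlt
    push_neg at hlt
    have h1 : 1 ≤ N' := by omega
    have hdc := (hB1 h1).1
    have h2 := hVW (N + 1) (by omega) (by omega)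
    rw [hdc] at h2
    exact false_emb hW (t := N + 1) (by omega) (Or.inr (by omega)) h2
  constructor
  · rcases Nat.eq_zero_or_pos N with h0 | h1
    · omega
    · have := (hA h1).2
      omega
  · intro h1
    exact (hA h1).1

lemma core : ∀ (ps : List (Bool × ℕ)) (kk n : ℕ) (c : Bool) (V : List Bool),
    1 ≤ kk → GoodPs ps → RunsOK kk n c ps →
    (∃ n' d ps', ps'.length = ps.length ∧ GoodPs ps' ∧
      V = List.replicate n' d ++ blks ps') →
    SimonCongr (kk + ps.length) V (List.replicate n c ++ blks ps) →
    V = List.replicate n c ++ blks ps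
  | [], kk, n, c, V, hkk, hps, hrun, ⟨n', d, ps', hlen, hps', hVeq⟩, hsc => by
    have hps'nil : ps' = [] := List.length_eq_zero_iff.mp (by simpa using hlen)
    subst hps'nil
    simp only [blks_nil, List.append_nil] at hVeq ⊢
    subst hVeq
    simp only [blks_nil, List.append_nil, List.length_nil, Nat.add_zero] at hsc
    have hrun' : n + 1 ≤ kk := hrun
    have h1 : List.replicate n c <+ List.replicate n' d :=
      (hsc _ (by simp; omega)).mpr (List.Sublist.refl _)
    have hnn' : n ≤ n' := by simpa using h1.length_le
    have h2 : ¬ n < n' := by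
      intro hlt
      have h3 : List.replicate (n + 1) d <+ List.replicate n' d :=
        (List.replicate_sublist_replicate d).mpr (by omega)
      have h4 := (hsc _ (by simp; omega)).mp h3
      have h5 := h4.length_le
      simp only [List.length_replicate] at h5
      omega
    have hnn : n' = n := by omega
    rcases Nat.eq_zero_or_pos n with h0 | hpos
    · rw [hnn, h0]; rfl
    · have hc : c ∈ List.replicate n' d := h1.subset (by simp [List.mem_replicate]; omega)
      have hcd : c = d := List.eq_of_mem_replicate hc
      rw [hnn, hcd]
  | (f, q) :: rest, kk, n, c, V, hkk, hps, hrun, ⟨n', d, ps', hlen, hps', hVeq⟩, hsc => by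
    obtain ⟨⟨f', q'⟩, rest', rfl⟩ : ∃ p ps'', ps' = p :: ps'' := by
      rcases ps' with _ | ⟨p, ps''⟩
      · simp at hlen
      · exact ⟨p, ps'', rfl⟩
    have hq : 1 ≤ q := hps (f, q) (by simp)
    have hq' : 1 ≤ q' := hps' (f', q') (by simp)
    have hrest : GoodPs rest := fun x hx => hps x (List.mem_cons_of_mem _ hx)
    have hrest' : GoodPs rest' := fun x hx => hps' x (List.mem_cons_of_mem _ hx)
    have hlen' : rest'.length = rest.length := by simpa using hlen
    have hrunh : n + 1 ≤ kk := hrun.1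
    have hrunt := hrun.2
    rw [hVeq] at hsc
    have hrq := run_eq (kk := kk) (r := rest.length + 1) hps hps' (by simp)
      (by simp [hlen']) hrunh (by simpa using hsc)
    obtain ⟨hn'n, hdc⟩ := hrq
    have hVc : List.replicate n' d = List.replicate n c := by
      rw [hn'n]
      rcases Nat.eq_zero_or_pos n with h0 | hpos
      · simp [h0]
      · rw [hdc hpos]
    rw [hVc] at hVeq hsc
    -- Phase 2 : first letters of the leading blocks agree
    have hf' : f' = f := by
      by_contra hne
      have hf'e : f' = !f := bool_eq_not hne
      have hTV : List.replicate n c ++ ([f', !f'] ++ chain rest) <+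
          List.replicate n c ++ blks ((f', q') :: rest') := by
        refine (List.append_sublist_append_left _).mpr ?_
        rw [blks_cons]
        refine List.Sublist.append ?_ (emb_univ _ _ hrest' (by rw [chain_length, hlen']))
        exact List.cons_sublist_cons.mpr (List.singleton_sublist.mpr
          (List.mem_replicate.mpr ⟨by omega, rfl⟩))
      have hTW := (hsc _ (by simp [chain_length]; omega)).mp hTV
      rw [hf'e] at hTW
      simp only [Bool.not_not] at hTW
      have hTW' : ([!f, f] ++ chain rest) <+ blks ((f, q) :: rest) :=
        (List.append_sublist_append_left (List.replicate n c)).mp hTW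
      exact theta_false hq hrest hTW'
    subst hf'
    -- Phase 3 : peel the first arch
    have hcase' := Classical.em (1 ≤ n ∧ f' = !c)
    rcases hcase' with hcase | hcase
    · have hxP : f' ∉ List.replicate n c := by
        intro hmem
        have h2 := List.eq_of_mem_replicate hmem
        rw [hcase.2] at h2
        cases c <;> simp_all
      have hWdec : List.replicate n c ++ blks ((f', q) :: rest)
          = List.replicate n c ++ f' :: (List.replicate q (!f') ++ blks rest) := by
        rw [blks_cons]
        rfl
      have hVdec : V = List.replicate n c ++ f' :: (List.replicate q' (!f') ++ blks rest') := by
        rw [hVeq, blks_cons]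
        rfl
      have hVblk : List.replicate n c ++ blks ((f', q') :: rest')
          = List.replicate n c ++ f' :: (List.replicate q' (!f') ++ blks rest') := by
        rw [blks_cons]
        rfl
      rw [hWdec] at hsc ⊢
      rw [hVblk] at hsc
      have hsc2 : SimonCongr (kk + rest.length) (List.replicate q' (!f') ++ blks rest')
          (List.replicate q (!f') ++ blks rest) := by
        have h3 := sc_peel hxP hsc
        have h4 : kk + ((f', q) :: rest).length - 1 = kk + rest.length := by simp
        rwa [h4] at h3
      have hstep : step n c (f', q) = q := by simp [step, hcase]
      have hIH := core rest kk q (!f') (List.replicate q' (!f') ++ blks rest') hkk hrest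
        (by rw [← hstep]; exact hrunt) ⟨q', !f', rest', hlen', hrest', rfl⟩ hsc2
      rw [hVdec, hIH]
    · have hxP : (!f') ∉ List.replicate n c ++ [f'] := by
        intro hmem
        rcases List.mem_append.mp hmem with h | h
        · have h2 := List.eq_of_mem_replicate h
          have hpos : 1 ≤ n := by
            rcases Nat.eq_zero_or_pos n with h0 | hpos
            · subst h0; simp at h
            · exact hpos
          have h3 : ¬ f' = !c := fun he => hcase ⟨hpos, he⟩
          have h4 : f' = c := by cases f' <;> cases c <;> simp_all
          rw [h4] at h2
          cases c <;> simp_all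
        · simp at h
      obtain ⟨q0, rfl⟩ : ∃ q0, q = q0 + 1 := ⟨q - 1, by omega⟩
      obtain ⟨q0', rfl⟩ : ∃ q0', q' = q0' + 1 := ⟨q' - 1, by omega⟩
      have hWdec : List.replicate n c ++ blks ((f', q0 + 1) :: rest)
          = (List.replicate n c ++ [f']) ++ (!f') :: (List.replicate q0 (!f') ++ blks rest) := by
        rw [blks_cons]
        simp [blk, List.replicate_succ]
      have hVdec : V
          = (List.replicate n c ++ [f']) ++ (!f') :: (List.replicate q0' (!f') ++ blks rest') := by
        rw [hVeq, blks_cons]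
        simp [blk, List.replicate_succ]
      have hVblk : List.replicate n c ++ blks ((f', q0' + 1) :: rest')
          = (List.replicate n c ++ [f']) ++ (!f') :: (List.replicate q0' (!f') ++ blks rest') := by
        rw [blks_cons]
        simp [blk, List.replicate_succ]
      rw [hWdec] at hsc ⊢
      rw [hVblk] at hsc
      have hsc2 : SimonCongr (kk + rest.length) (List.replicate q0' (!f') ++ blks rest')
          (List.replicate q0 (!f') ++ blks rest) := by
        have h3 := sc_peel hxP hsc
        have h4 : kk + ((f', q0 + 1) :: rest).length - 1 = kk + rest.length := by simp
        rwa [h4] at h3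
      have hstep : step n c (f', q0 + 1) = q0 := by
        simp only [step]
        rw [if_neg (by simpa using hcase)]
        omega
      have hIH := core rest kk q0 (!f') (List.replicate q0' (!f') ++ blks rest') hkk hrest
        (by rw [← hstep]; exact hrunt) ⟨q0', !f', rest', hlen', hrest', rfl⟩ hsc2
      rw [hVdec, hIH]

lemma emb_flatten : ∀ (s : List Bool) (L : List (List Bool)),
    (∀ a ∈ L, ∀ b : Bool, b ∈ a) → s.length ≤ L.length → s <+ L.flatten
  | [], _, _, _ => List.nil_sublist _
  | a :: s, [], _, h => by simp at h
  | x :: s, a :: L, hall, h => by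
    rw [List.flatten_cons]
    have h1 : [x] <+ a := List.singleton_sublist.mpr (hall a (by simp) x)
    have h2 : s <+ L.flatten := emb_flatten s L (fun g hg => hall g (by simp [hg]))
      (by simpa using h)
    simpa using h1.append h2

lemma arch_struct {a : List Bool} (h : IsArchOn Finset.univ a) :
    ∃ p x, 1 ≤ p ∧ a = List.replicate p (!x) ++ [x] := by
  obtain ⟨hall, a', x, rfl, -, hx⟩ := h
  have ha' : a' = List.replicate a'.length (!x) := by
    rw [List.eq_replicate_iff]
    exact ⟨rfl, fun b hb => bool_eq_not (fun hbx => hx (hbx ▸ hb))⟩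
  have hmem : (!x) ∈ a' := by
    have h2 := hall (!x) (Finset.mem_univ _)
    rcases List.mem_append.mp h2 with h3 | h3
    · exact h3
    · simp at h3
  have hne : a' ≠ [] := by rintro rfl; simp at hmem
  refine ⟨a'.length, x, ?_, by rw [← ha']⟩
  have := List.length_pos_iff.mpr hne
  omega

lemma first_occ {y : Bool} : ∀ {l : List Bool}, y ∈ l →
    ∃ pre rest, l = pre ++ y :: rest ∧ y ∉ pre := by
  intro l hl
  induction l with
  | nil => simp at hl
  | cons a t ih =>
    by_cases hay : a = y
    · exact ⟨[], t, by rw [hay]; rfl, by simp⟩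
    · have hyt : y ∈ t := by
        rcases List.mem_cons.mp hl with h | h
        · exact absurd h.symm hay
        · exact h
      obtain ⟨pre, rest, heq, hnp⟩ := ih hyt
      refine ⟨a :: pre, rest, by rw [heq]; rfl, ?_⟩
      intro hmem
      rcases List.mem_cons.mp hmem with h | h
      · exact hay h.symm
      · exact hnp h

lemma exists_first_arch {u : List Bool} (h : ∀ b : Bool, b ∈ u) :
    ∃ p x rest, 1 ≤ p ∧ u = (List.replicate p (!x) ++ [x]) ++ rest := by
  rcases u with _ | ⟨b, t⟩
  · simpa using h true
  · have hb' : (!b) ∈ t := by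
      have h2 := h (!b)
      rcases List.mem_cons.mp h2 with h1 | h1
      · exact absurd h1 (by simp)
      · exact h1
    obtain ⟨pre, rest, heq, hnp⟩ := first_occ hb'
    refine ⟨pre.length + 1, !b, rest, by omega, ?_⟩
    have hpre : pre = List.replicate pre.length b := by
      rw [List.eq_replicate_iff]
      refine ⟨rfl, fun x hx => ?_⟩
      have hxb : x ≠ !b := fun hxb => hnp (hxb ▸ hx)
      cases x <;> cases b <;> simp_all
    rw [heq, hpre]
    simp [List.replicate_succ]

lemma greedy_arch_fact (u : List Bool) : ∃ ars r, IsArchFactOn Finset.univ u ars r := by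
  generalize hn : u.length = N
  induction N using Nat.strong_induction_on generalizing u with
  | _ N ih =>
    by_cases h : ∀ b : Bool, b ∈ u
    · obtain ⟨p, x, rest, hp, hdecomp⟩ := exists_first_arch h
      have hlen : rest.length < N := by
        subst hn
        rw [hdecomp]
        simp
        omega
      obtain ⟨ars, r, heq, harch, hrest⟩ := ih rest.length hlen rest rfl
      refine ⟨(List.replicate p (!x) ++ [x]) :: ars, r, ?_, ?_, hrest⟩
      · rw [hdecomp, heq]
        simp
      · intro a ha
        rcases List.mem_cons.mp ha with rfl | ha'
        · refine ⟨?_, List.replicate p (!x), x, rfl, Finset.mem_univ x,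
            by simp [List.mem_replicate]⟩
          intro b _
          rcases (by cases b <;> cases x <;> simp : b = x ∨ b = !x) with rfl | rfl
          · simp
          · simp [List.mem_replicate]
            omega
        · exact harch a ha'
    · refine ⟨[], u, by simp, by simp, ?_⟩
      intro hall
      exact h (fun b => hall b (Finset.mem_univ b))

lemma univ_of_arches {u : List Bool} {ars : List (List Bool)} {r : List Bool}
    (heq : u = ars.flatten ++ r) (harch : ∀ a ∈ ars, IsArchOn Finset.univ a) :
    UniversalOn Finset.univ ars.length u := by
  intro s hs _
  have h1 : s <+ ars.flatten := emb_flatten s ars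
    (fun a ha b => (harch a ha).1 b (Finset.mem_univ b)) (by omega)
  rw [heq]
  exact h1.trans (List.sublist_append_left _ _)

lemma not_univ_wit {ars : List (List Bool)} {r : List Bool} {b : Bool}
    (harch : ∀ a ∈ ars, IsArchOn Finset.univ a) (hb : b ∉ r) :
    ∃ t : List Bool, t.length = ars.length + 1 ∧ ¬ t <+ ars.flatten ++ r := by
  induction ars with
  | nil => exact ⟨[b], rfl, by simpa [List.singleton_sublist] using hb⟩
  | cons a ars ih =>
    obtain ⟨t, htl, ht⟩ := ih (fun a' ha' => harch a' (by simp [ha']))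
    obtain ⟨-, a', x, rfl, -, hx⟩ := harch a (by simp)
    refine ⟨x :: t, by simp [htl], ?_⟩
    intro hsub
    refine ht (peel_x hx ?_)
    simpa [List.append_assoc] using hsub

lemma universal_mono {a b : ℕ} {u : List Bool} (h : UniversalOn Finset.univ a u)
    (hba : b ≤ a) : UniversalOn Finset.univ b u := by
  intro s hs _
  have hpad : (s ++ List.replicate (a - b) true) <+ u := h _ (by simp [hs]; omega) (by simp)
  exact (List.sublist_append_left _ _).trans hpad

lemma universal_reverse {a : ℕ} {u : List Bool} (h : UniversalOn Finset.univ a u) :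
    UniversalOn Finset.univ a u.reverse := by
  intro s hs _
  have h1 := h s.reverse (by simp [hs]) (by simp)
  have h2 := List.reverse_sublist.mpr h1
  simpa using h2

lemma rev_arches_blks : ∀ (ars : List (List Bool)), (∀ a ∈ ars, IsArchOn Finset.univ a) →
    ∃ ps', ps'.length = ars.length ∧ GoodPs ps' ∧ ars.flatten.reverse = blks ps' := by
  intro ars
  induction ars with
  | nil => exact fun _ => ⟨[], rfl, fun p hp => by simp at hp, by simp [blks]⟩
  | cons a t ih =>
    intro harch
    obtain ⟨ps', hl, hg, heq⟩ := ih (fun a' ha' => harch a' (by simp [ha']))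
    obtain ⟨p, x, hp, hax⟩ := arch_struct (harch a (by simp))
    refine ⟨ps' ++ [(x, p)], by simp [hl], ?_, ?_⟩
    · intro pp hpp
      rcases List.mem_append.mp hpp with h1 | h1
      · exact hg pp h1
      · simp at h1
        rw [h1]
        exact hp
    · rw [List.flatten_cons, List.reverse_append, heq, blks_append, hax]
      simp [blks, blk, List.reverse_replicate]

lemma pump_sc {k m i ni : ℕ} {ci : Bool} {X Y : List Bool}
    (hX : UniversalOn Finset.univ i X) (hY : UniversalOn Finset.univ (m - i) Y)
    (him : i ≤ m) (hmk : m < k) (hni : k - m ≤ ni) :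
    SimonCongr k (X ++ List.replicate (ni + 1) ci ++ Y) (X ++ List.replicate ni ci ++ Y) := by
  intro s hs
  constructor
  · intro hv
    rcases List.sublist_append_iff.mp hv with ⟨s12, s3, rfl, h12, h3⟩
    rcases List.sublist_append_iff.mp h12 with ⟨s1, s2, rfl, h1, h2⟩
    rcases List.sublist_replicate_iff.mp h2 with ⟨j, hj, rfl⟩
    by_cases hjn : j ≤ ni
    · exact (h1.append ((List.replicate_sublist_replicate ci).mpr hjn)).append h3
    · have hj' : j = ni + 1 := by omega
      subst hj'
      have hlen : s1.length + (ni + 1) + s3.length ≤ k := by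
        simp only [List.length_append, List.length_replicate] at hs
        omega
      have hcases : s1.length + 1 ≤ i ∨ s3.length + 1 ≤ m - i := by omega
      rcases hcases with hc | hc
      · have hpad : s1 ++ [ci] <+ X := by
          have h4 := hX (s1 ++ [ci] ++ List.replicate (i - (s1.length + 1)) true)
            (by simp; omega) (by simp)
          exact (List.sublist_append_left _ _).trans h4
        have hgoal : ((s1 ++ [ci]) ++ List.replicate ni ci) ++ s3 <+
            (X ++ List.replicate ni ci) ++ Y :=
          ((hpad.append (List.Sublist.refl _)).append h3)
        have hrw : (s1 ++ List.replicate (ni + 1) ci) ++ s3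
            = ((s1 ++ [ci]) ++ List.replicate ni ci) ++ s3 := by
          simp [List.replicate_succ]
        rw [hrw]
        exact hgoal
      · have hpad : ci :: s3 <+ Y := by
          have h4 := hY ((ci :: s3) ++ List.replicate (m - i - (s3.length + 1)) true)
            (by simp; omega) (by simp)
          exact (List.sublist_append_left _ _).trans h4
        have hgoal : (s1 ++ List.replicate ni ci) ++ (ci :: s3) <+
            (X ++ List.replicate ni ci) ++ Y :=
          ((h1.append (List.Sublist.refl _)).append hpad)
        have hrw : (s1 ++ List.replicate (ni + 1) ci) ++ s3
            = (s1 ++ List.replicate ni ci) ++ (ci :: s3) := by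
          simp [List.replicate_succ']
        rw [hrw]
        exact hgoal
  · intro hw
    have hmon : X ++ List.replicate ni ci ++ Y <+ X ++ List.replicate (ni + 1) ci ++ Y :=
      ((List.Sublist.refl X).append
        ((List.replicate_sublist_replicate ci).mpr (by omega))).append (List.Sublist.refl Y)
    exact hw.trans hmon

lemma mid_split (A B : ℕ → List Bool) (m : ℕ) : ∀ d j, j + d = m →
    ((List.range m).map fun i => A i ++ B (i + 1)).flatten ++ A m
      = ((List.range j).map fun i => A i ++ B (i + 1)).flatten ++ A j
        ++ ((List.range' (j + 1) (m - j)).map fun i => B i ++ A i).flatten := by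
  intro d
  induction d with
  | zero =>
    intro j hj
    have hjm : j = m := by omega
    subst hjm
    simp
  | succ d ih =>
    intro j hj
    have hIH := ih (j + 1) (by omega)
    have hmj : m - j = (m - (j + 1)) + 1 := by omega
    rw [hmj]
    have hr : List.range' (j + 1) ((m - (j + 1)) + 1)
        = (j + 1) :: List.range' (j + 2) (m - (j + 1)) := by
      have := List.range'_succ (s := j + 1) (n := m - (j + 1)) (step := 1)
      simpa using this
    rw [hr]
    rw [List.map_cons, List.flatten_cons]
    rw [hIH, List.range_succ, List.map_append, List.flatten_append]
    simp [List.append_assoc]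

lemma rev_arch_form {g : List Bool} (h : IsArchOn Finset.univ g.reverse) :
    1 ≤ g.length - 1 ∧ g = blk (g.headI, g.length - 1) := by
  obtain ⟨p, x, hp, hrev⟩ := arch_struct h
  have hg : g = x :: List.replicate p (!x) := by
    have h3 := congrArg List.reverse hrev
    rw [List.reverse_reverse] at h3
    rw [h3, List.reverse_append, List.reverse_replicate]
    rfl
  constructor
  · rw [hg]; simp; omega
  · rw [hg]; simp [blk]

lemma beta_shape {b : List Bool} {f X : Bool}
    (h1 : ∃ s, b = List.replicate s (!X) ++ [X])
    (h2 : ∃ t, b = f :: List.replicate t (!f)) :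
    (b = [f] ∧ f = X) ∨ (b = [f, !f] ∧ X = !f) := by
  obtain ⟨s, rfl⟩ := h1
  obtain ⟨t, h2⟩ := h2
  rcases s with _ | s
  · left
    simp only [List.replicate_zero, List.nil_append] at h2 ⊢
    have hfx : f = X := by
      have := congrArg (·.headI) h2
      simpa using this.symm
    simp [hfx]
  · rcases s with _ | s
    · right
      -- b = [!X, X]
      simp only [List.replicate_succ, List.replicate_zero, List.nil_append,
        List.cons_append] at h2 ⊢
      -- h2 : [!X, X] = f :: replicate t !f
      have hf : f = !X := by
        have := congrArg (·.headI) h2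
        simpa using this.symm
      subst hf
      rcases t with _ | t
      · simp at h2
      · rcases t with _ | t
        · exact ⟨by simp, by simp⟩
        · exfalso
          simp [List.replicate_succ] at h2
    · exfalso
      -- s+2 case: b = !X :: !X :: ... ++ [X]
      simp only [List.replicate_succ, List.cons_append] at h2
      -- h2 : !X :: !X :: (replicate s !X ++ [X]) = f :: replicate t !f
      rcases t with _ | t
      · simp at h2
      · simp only [List.replicate_succ] at h2
        injection h2 with ha hb
        injection hb with hc hd
        subst ha
        exact absurd hc (by cases X <;> simp)

lemma unary_of_missing {l : List Bool} {b : Bool} (hb : b ∉ l) :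
    l = List.replicate l.length l.headI := by
  rcases l with _ | ⟨a, t⟩
  · rfl
  · rw [List.eq_replicate_iff]
    refine ⟨rfl, fun x hx => ?_⟩
    have hx' : x = !b := bool_eq_not (fun h => hb (h ▸ hx))
    have ha : a = !b := bool_eq_not (fun h => hb (by simp [h]))
    simp only [List.headI, hx', ha]

lemma take_blk (f : Bool) (q L : ℕ) :
    (f :: List.replicate q (!f)).take (L + 1) = f :: List.replicate (min L q) (!f) := by
  rw [List.take_succ_cons, List.take_replicate]

lemma unary_two_contra {l : List Bool} {x : Bool} (h1 : x ∈ l) (h2 : (!x) ∈ l)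
    (h : ∃ t c, l = List.replicate t c) : False := by
  obtain ⟨t, c, rfl⟩ := h
  have e1 := List.eq_of_mem_replicate h1
  have e2 := List.eq_of_mem_replicate h2
  rw [e1] at e2
  cases x <;> simp_all

lemma arch_split_one {Aj : List Bool} {f X : Bool} {P : ℕ}
    (h : Aj ++ [f] = List.replicate P (!X) ++ [X]) :
    Aj = List.replicate P (!X) ∧ f = X := by
  have h2 := List.append_inj' h (by simp)
  refine ⟨h2.1, ?_⟩
  have := h2.2
  simpa using this

lemma arch_split_two {Aj : List Bool} {f X : Bool} {P : ℕ} (hP : 1 ≤ P)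
    (h : Aj ++ [f, !f] = List.replicate P (!X) ++ [X]) :
    Aj = List.replicate (P - 1) (!X) ∧ f = !X ∧ X = !f := by
  have hre : Aj ++ [f, !f] = (Aj ++ [f]) ++ [!f] := by simp
  rw [hre] at h
  have h2 := List.append_inj' h (by simp)
  have hXf : X = !f := by simpa using h2.2.symm
  obtain ⟨P', rfl⟩ : ∃ P', P = P' + 1 := ⟨P - 1, by omega⟩
  rw [List.replicate_succ'] at h2
  have h3 := List.append_inj' h2.1 (by simp)
  have hf : f = !X := by simpa using h3.2
  exact ⟨by simpa using h3.1, hf, hXf⟩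

end SimonAux


open SimonAux in
/-- a binary Simon congruence class is a singleton iff
`ι(w) < k` and all `α`-factors are shorter than `k − ι(w)`. -/
theorem binary_singleton_class_iff (k : ℕ) (hk : 1 ≤ k) (w : List Bool) (m : ℕ)
    (A B : ℕ → List Bool)
    (hw : IsAlphaBetaFact w m A B) (hiw : iotaUniv w = m) :
    {w' : List Bool | SimonCongr k w' w} = {w} ↔
      (m < k ∧ ∀ i ≤ m, (A i).length < k - m) := by
  classical
  obtain ⟨⟨hw1eq, hw1arch, hw1rest⟩, hw2eq, hw2arch, hw2rest⟩ := hw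
  have hofn : (List.ofFn fun i : Fin m => A i.val ++ B (i.val + 1))
      = (List.range m).map (fun i => A i ++ B (i + 1)) := by
    apply List.ext_getElem <;> simp
  have hwD1 : w = ((List.range m).map fun i => A i ++ B (i + 1)).flatten ++ A m := by
    rw [hw1eq, hofn]
  have hArchF : ∀ i, i < m → IsArchOn Finset.univ (A i ++ B (i + 1)) := fun i hi =>
    hw1arch _ (by rw [List.mem_ofFn]; exact ⟨⟨i, hi⟩, rfl⟩)
  have hArchR : ∀ j, 1 ≤ j → j ≤ m → IsArchOn Finset.univ ((B j ++ A j).reverse) := by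
    intro j h1 h2
    refine hw2arch _ ?_
    rw [List.mem_ofFn]
    refine ⟨⟨m - j, by omega⟩, ?_⟩
    have hmj : m - (m - j) = j := by omega
    simp only [hmj]
  have hA0 : A 0 = List.replicate (A 0).length ((A 0).headI) := by
    have hex : ∃ b : Bool, b ∉ (A 0).reverse := by
      by_contra hb
      push_neg at hb
      exact hw2rest (fun x _ => hb x)
    obtain ⟨b, hb⟩ := hex
    exact unary_of_missing (b := b) (fun h => hb (by simpa using h))
  obtain ⟨c0, hc0⟩ : ∃ c0, (A 0).headI = c0 := ⟨_, rfl⟩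
  rw [hc0] at hA0
  have hblk : ∀ j, 1 ≤ j → j ≤ m →
      1 ≤ (B j ++ A j).length - 1 ∧
      (B j ++ A j) = blk ((B j ++ A j).headI, (B j ++ A j).length - 1) :=
    fun j h1 h2 => rev_arch_form (hArchR j h1 h2)
  have hAtail : ∀ j, 1 ≤ j → j ≤ m → B j ≠ [] →
      ∃ t, A j = List.replicate t (!(B j ++ A j).headI) := by
    intro j h1 h2 hne
    obtain ⟨hq1, hba⟩ := hblk j h1 h2
    set f := (B j ++ A j).headI with hfdef
    set q := (B j ++ A j).length - 1 with hqdef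
    obtain ⟨L, hL⟩ : ∃ L, (B j).length = L + 1 :=
      ⟨(B j).length - 1, by have := List.length_pos_iff.mpr hne; omega⟩
    have hAj : A j = (blk (f, q)).drop (B j).length := by
      rw [← hba, List.drop_left]
    refine ⟨q - L, ?_⟩
    rw [hAj, hL]
    simp only [blk, List.drop_succ_cons, List.drop_replicate]
  have hBne : ∀ j, 1 ≤ j → j ≤ m → B j ≠ [] := by
    intro j
    induction j with
    | zero => intro h; exact absurd h (by omega)
    | succ j ih =>
      intro h1 h2 hBem
      obtain ⟨p, x, hp, harch⟩ := arch_struct (hArchF j (by omega))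
      rw [hBem, List.append_nil] at harch
      refine unary_two_contra (l := A j) (x := x) ?_ ?_ ?_
      · rw [harch]; simp
      · rw [harch]; simp [List.mem_replicate]; omega
      · rcases Nat.eq_zero_or_pos j with h0 | hj1
        · subst h0; exact ⟨_, _, hA0⟩
        · obtain ⟨t, ht⟩ := hAtail j hj1 (by omega) (ih hj1 (by omega))
          exact ⟨t, _, ht⟩
  have hAun : ∀ j, 1 ≤ j → j ≤ m → ∃ t, A j = List.replicate t (!(B j ++ A j).headI) :=
    fun j h1 h2 => hAtail j h1 h2 (hBne j h1 h2)
  have hBshape : ∀ j, 1 ≤ j → j ≤ m →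
      (B j = [(B j ++ A j).headI] ∨
        B j = [(B j ++ A j).headI, !((B j ++ A j).headI)]) := by
    intro j h1 h2
    obtain ⟨hq1, hba⟩ := hblk j h1 h2
    set f := (B j ++ A j).headI with hfdef
    set q := (B j ++ A j).length - 1 with hqdef
    obtain ⟨L, hL⟩ : ∃ L, (B j).length = L + 1 :=
      ⟨(B j).length - 1, by have := List.length_pos_iff.mpr (hBne j h1 h2); omega⟩
    have hform2 : ∃ t, B j = f :: List.replicate t (!f) := by
      refine ⟨min L q, ?_⟩
      have hBj : B j = (blk (f, q)).take (B j).length := by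
        rw [← hba, List.take_left]
      rw [hBj, hL]
      exact take_blk f q L
    obtain ⟨P, X, hP, harchj⟩ := arch_struct (hArchF (j - 1) (by omega))
    have hj1 : j - 1 + 1 = j := by omega
    rw [hj1] at harchj
    have hform1 : ∃ s, B j = List.replicate s (!X) ++ [X] := by
      refine ⟨P - (A (j-1)).length, ?_⟩
      have hLP : (A (j-1)).length ≤ P := by
        have hlen := congrArg List.length harchj
        simp only [List.length_append, List.length_replicate, List.length_cons,
          List.length_nil] at hlen
        omega
      have hBj : B j = (List.replicate P (!X) ++ [X]).drop (A (j-1)).length := by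
        rw [← harchj, List.drop_left]
      rw [hBj, List.drop_append, List.drop_replicate]
      have h0 : (A (j-1)).length - (List.replicate P (!X)).length = 0 := by
        simp
        omega
      rw [h0, List.drop_zero]
    rcases beta_shape hform1 hform2 with ⟨hb, -⟩ | ⟨hb, -⟩
    · left; exact hb
    · right; exact hb
  obtain ⟨ps, hpsdef⟩ : ∃ ps : List (Bool × ℕ), ps = (List.range' 1 m).map
      (fun j => ((B j ++ A j).headI, (B j ++ A j).length - 1)) := ⟨_, rfl⟩
  have hpslen : ps.length = m := by rw [hpsdef]; simp
  have hpsgood : GoodPs ps := by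
    intro p hp
    rw [hpsdef] at hp
    simp only [List.mem_map, List.mem_range'_1] at hp
    obtain ⟨j, ⟨hj1, hj2⟩, rfl⟩ := hp
    exact (hblk j hj1 (by omega)).1
  have hblks : blks ps = ((List.range' 1 m).map fun j => B j ++ A j).flatten := by
    rw [hpsdef]
    unfold blks
    rw [List.map_map]
    congr 1
    apply List.map_congr_left
    intro j hj
    simp only [List.mem_range'_1] at hj
    simp only [Function.comp_apply]
    exact ((hblk j hj.1 (by omega)).2).symm
  have hwform : w = A 0 ++ blks ps := by
    rw [hblks, hwD1]
    have hms := mid_split A B m m 0 (by omega)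
    simpa using hms
  have hUm : UniversalOn Finset.univ m w := by
    intro s hs _
    have h1 : s <+ blks ps := emb_univ s ps hpsgood (by omega)
    rw [hwform]
    exact h1.trans (List.sublist_append_right _ _)
  have hwitm : ¬ ((!c0) :: chain ps <+ w) := by
    intro hcon
    rw [hwform, hA0] at hcon
    exact false_emb (C := c0) (c0 := !c0) hpsgood (t := 1) le_rfl (Or.inl (by simp))
      (by simpa using hcon)
  have hwitlen : ((!c0) :: chain ps).length = m + 1 := by
    simp [chain_length, hpslen]
  constructor
  · -- singleton class → conditions
    intro hset
    by_contra hc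
    push_neg at hc
    rcases Nat.lt_or_ge m k with hmk | hkm
    · obtain ⟨i, him, hni⟩ := hc hmk
      have hAi : ∃ ci, A i = List.replicate (A i).length ci := by
        rcases Nat.eq_zero_or_pos i with h0 | hi1
        · subst h0
          exact ⟨_, hA0⟩
        · obtain ⟨t, ht⟩ := hAun i hi1 him
          have hlt : (A i).length = t := by rw [ht]; simp
          refine ⟨!(B i ++ A i).headI, ?_⟩
          rw [hlt]
          exact ht
      obtain ⟨ci, hAi⟩ := hAi
      have hsplit : w = ((List.range i).map fun t => A t ++ B (t + 1)).flatten ++ A i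
          ++ ((List.range' (i + 1) (m - i)).map fun j => B j ++ A j).flatten := by
        rw [hwD1, mid_split A B m (m - i) i (by omega)]
      have hUX : UniversalOn Finset.univ i
          (((List.range i).map fun t => A t ++ B (t + 1)).flatten) := by
        intro s hs _
        refine emb_flatten s _ ?_ (by simp [hs])
        intro a ha b
        simp only [List.mem_map, List.mem_range] at ha
        obtain ⟨t, ht, rfl⟩ := ha
        exact (hArchF t (by omega)).1 b (Finset.mem_univ b)
      have hUY : UniversalOn Finset.univ (m - i)
          (((List.range' (i + 1) (m - i)).map fun j => B j ++ A j).flatten) := by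
        intro s hs _
        refine emb_flatten s _ ?_ (by simp [hs])
        intro a ha b
        simp only [List.mem_map, List.mem_range'_1] at ha
        obtain ⟨j, ⟨hj1, hj2⟩, rfl⟩ := ha
        rw [(hblk j (by omega) (by omega)).2]
        exact mem_blk b _ (hblk j (by omega) (by omega)).1
      have hscv := pump_sc (k := k) (ni := (A i).length) (ci := ci) hUX hUY him hmk hni
      rw [← hAi, ← hsplit] at hscv
      have hvmem : (((List.range i).map fun t => A t ++ B (t + 1)).flatten
          ++ List.replicate ((A i).length + 1) ci
          ++ ((List.range' (i + 1) (m - i)).map fun j => B j ++ A j).flatten)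
          ∈ {w' : List Bool | SimonCongr k w' w} := hscv
      rw [hset, Set.mem_singleton_iff] at hvmem
      have hlen := congrArg List.length hvmem
      rw [hsplit] at hlen
      simp only [List.length_append, List.length_replicate] at hlen
      omega
    · have hUk : UniversalOn Finset.univ k w := universal_mono hUm hkm
      have hscw : SimonCongr k (w ++ w) w := by
        intro s hs
        constructor
        · intro _
          have hpad := hUk (s ++ List.replicate (k - s.length) true)
            (by simp; omega) (by simp)
          exact (List.sublist_append_left _ _).trans hpad
        · intro hsw
          exact hsw.trans (List.sublist_append_left w w)
      have hne : w ≠ [] := by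
        intro h0
        have h1 := hUm (List.replicate m true) (by simp) (by simp)
        rw [h0] at h1
        have h2 := h1.length_le
        simp at h2
        omega
      have hmem : (w ++ w) ∈ {w' : List Bool | SimonCongr k w' w} := hscw
      rw [hset, Set.mem_singleton_iff] at hmem
      have hlen := congrArg List.length hmem
      simp only [List.length_append] at hlen
      have : w.length = 0 := by omega
      exact hne (List.length_eq_zero_iff.mp this)
  · rintro ⟨hmk, hbound⟩
    apply Set.eq_singleton_iff_unique_mem.mpr
    refine ⟨sc_refl k w, ?_⟩
    intro v hv
    have hv' : SimonCongr k v w := hv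
    have hUv : UniversalOn Finset.univ m v := by
      intro s hs hsu
      exact (hv' s (by omega)).mpr (hUm s hs hsu)
    have hNUv : ¬ (((!c0) :: chain ps) <+ v) := by
      intro hcon
      exact hwitm ((hv' _ (by rw [hwitlen]; omega)).mp hcon)
    obtain ⟨ars, r, hfeq, hfarch, hfrest⟩ := greedy_arch_fact v.reverse
    have hUar : UniversalOn Finset.univ ars.length v.reverse :=
      univ_of_arches hfeq hfarch
    obtain ⟨b, hbr⟩ : ∃ b : Bool, b ∉ r := by
      by_contra hb
      push_neg at hb
      exact hfrest (fun x _ => hb x)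
    obtain ⟨twit, htwl, htw⟩ := not_univ_wit hfarch hbr
    have hcnt : ars.length = m := by
      rcases Nat.lt_or_ge ars.length m with hlt | hge
      · have h1 := universal_mono (universal_reverse hUv)
          (by omega : ars.length + 1 ≤ m)
        have h2 := h1 twit htwl (by simp)
        rw [hfeq] at h2
        exact absurd h2 htw
      · rcases Nat.eq_or_lt_of_le hge with heq | hlt
        · omega
        · exfalso
          have h1 := universal_mono hUar (by omega : m + 1 ≤ ars.length)
          have h2 := universal_reverse h1
          rw [List.reverse_reverse] at h2
          exact hNUv (h2 _ hwitlen (by simp))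
    obtain ⟨ps', hl', hg', hfl⟩ := rev_arches_blks ars hfarch
    have hvform : v = r.reverse ++ blks ps' := by
      have h3 := congrArg List.reverse hfeq
      rw [List.reverse_reverse] at h3
      rw [h3, List.reverse_append, hfl]
    have hrrev : r.reverse = List.replicate r.reverse.length (r.reverse.headI) :=
      unary_of_missing (b := b) (by simpa using hbr)
    have hRuns : RunsOK (k - m) (A 0).length (c0) ps := by
      rw [hpsdef]
      have claim : ∀ d j, j + d = m → ∀ c : Bool,
          (1 ≤ (A j).length → A j = List.replicate (A j).length c) →
          RunsOK (k - m) (A j).length c ((List.range' (j + 1) d).map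
            (fun l => ((B l ++ A l).headI, (B l ++ A l).length - 1))) := by
        intro d
        induction d with
        | zero =>
          intro j hj c hcomp
          simp only [List.range'_zero, List.map_nil]
          show (A j).length + 1 ≤ k - m
          have := hbound j (by omega)
          omega
        | succ d ih =>
          intro j hj c hcomp
          have hr : List.range' (j + 1) (d + 1) = (j + 1) :: List.range' (j + 1 + 1) d := by
            have := List.range'_succ (s := j + 1) (n := d) (step := 1)
            simpa using this
          rw [hr, List.map_cons]
          refine ⟨by have := hbound j (by omega); omega, ?_⟩
          obtain ⟨P, X, hP, harchj⟩ := arch_struct (hArchF j (by omega))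
          have h1j : 1 ≤ j + 1 := by omega
          have hjm : j + 1 ≤ m := by omega
          obtain ⟨hq1, hba⟩ := hblk (j + 1) h1j hjm
          have hBsh := hBshape (j + 1) h1j hjm
          set f := (B (j + 1) ++ A (j + 1)).headI with hfdef
          set q := (B (j + 1) ++ A (j + 1)).length - 1 with hqdef
          rcases hBsh with hB1 | hB2
          · rw [hB1] at harchj
            obtain ⟨hAj, hfX⟩ := arch_split_one harchj
            have hnpos : 1 ≤ (A j).length := by rw [hAj]; simp; omega
            have hcX : c = !X := by
              have h2 := hcomp hnpos
              have hm1 : (!X) ∈ List.replicate (A j).length c := by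
                rw [← h2, hAj]
                simp [List.mem_replicate]
                omega
              exact (List.eq_of_mem_replicate hm1).symm
            have hstepv : step (A j).length c (f, q) = q := by
              simp only [step]
              rw [if_pos ⟨hnpos, by show f = !c; rw [hfX, hcX]; simp⟩]
            have hAj1 : A (j + 1) = List.replicate q (!f) := by
              have hdrop : A (j + 1) = (blk (f, q)).drop (B (j + 1)).length := by
                rw [← hba, List.drop_left]
              rw [hdrop, hB1]
              simp [blk]
            have hqlen : (A (j + 1)).length = q := by
              conv_lhs => rw [hAj1]
              simp
            have happ := ih (j + 1) (by omega) (!f)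
              (fun _ => by conv_lhs => rw [hAj1, ← hqlen])
            rw [hqlen] at happ
            show RunsOK (k - m) (step (A j).length c (f, q)) (!(f, q).1) _
            rw [hstepv]
            exact happ
          · rw [hB2] at harchj
            obtain ⟨hAj, hfX, hXf⟩ := arch_split_two hP harchj
            have hcond : ¬ (1 ≤ (A j).length ∧ f = !c) := by
              rintro ⟨hnpos, hfc⟩
              have h2 := hcomp hnpos
              have hcX : c = !X := by
                have hm1 : (!X) ∈ List.replicate (A j).length c := by
                  rw [← h2, hAj]
                  have hnpos' : 1 ≤ P - 1 := by
                    rw [hAj] at hnpos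
                    simpa using hnpos
                  simp [List.mem_replicate]
                  omega
                exact (List.eq_of_mem_replicate hm1).symm
              rw [hfX, hcX] at hfc
              exact absurd hfc (by cases X <;> simp)
            have hstepv : step (A j).length c (f, q) = q - 1 := by
              simp only [step]
              rw [if_neg (by simpa using hcond)]
            have hAj1 : A (j + 1) = List.replicate (q - 1) (!f) := by
              have hdrop : A (j + 1) = (blk (f, q)).drop (B (j + 1)).length := by
                rw [← hba, List.drop_left]
              rw [hdrop, hB2]
              show (blk (f, q)).drop (0 + 1 + 1) = _
              simp only [blk, List.drop_succ_cons, List.drop_zero, List.drop_replicate]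
            have hqlen : (A (j + 1)).length = q - 1 := by
              conv_lhs => rw [hAj1]
              simp
            have happ := ih (j + 1) (by omega) (!f)
              (fun _ => by conv_lhs => rw [hAj1, ← hqlen])
            rw [hqlen] at happ
            show RunsOK (k - m) (step (A j).length c (f, q)) (!(f, q).1) _
            rw [hstepv]
            exact happ
      have hfin := claim m 0 (by omega) (c0) (fun _ => hA0)
      simpa using hfin
    have hkk : 1 ≤ k - m := by omega
    have hsc' : SimonCongr ((k - m) + ps.length) v
        (List.replicate (A 0).length (c0) ++ blks ps) := by
      rw [← hA0, ← hwform]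
      have hkm' : (k - m) + ps.length = k := by rw [hpslen]; omega
      rw [hkm']
      exact hv'
    have hvw := core ps (k - m) (A 0).length (c0) v hkk hpsgood hRuns
      ⟨r.reverse.length, r.reverse.headI, ps', by rw [hl', hcnt, hpslen], hg',
        by rw [hvform]; congr 1⟩ hsc'
    rw [hvw, ← hA0]
    exact hwform.symm
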